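/- arXiv:2411.05255 — 3 statements merged into one kernel-verified Lean document; each statement's English description precedes it below -/
import Mathlib

section
/- Let f : 2^V → ℝ≥0 be a monotone submodular function with f(∅) = 0 on a finite set V, and let T = {t_1, …, t_k} ⊆ V be ordered so that f({t_1}) ≤ f({t_2}) ≤ … ≤ f({t_k}). Let OPT = min { ∑_{i=1}^k f(V_i) : V_1,…,V_k partition V and t_i ∈ V_i for all i }. Then f((V \ T) ∪ {t_k}) + ∑_{i=1}^{k-1} f({t_i}) ≤ (2 - 1/k)·OPT. -/
lemma f_biUnion_le' {V : Type*} [DecidableEq V]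
    (f : Finset V → ℝ)
    (hnn : ∀ S, 0 ≤ f S)
    (hsub : ∀ A B : Finset V, f (A ∩ B) + f (A ∪ B) ≤ f A + f B)
    (hempty : f ∅ = 0)
    {ι : Type*} [DecidableEq ι] (s : Finset ι) (Q : ι → Finset V) :
    f (s.biUnion Q) ≤ ∑ i ∈ s, f (Q i) := by
  induction s using Finset.induction_on with
  | empty => simp [hempty]
  | @insert a s ha ih =>
    rw [Finset.biUnion_insert, Finset.sum_insert ha]
    have h1 := hsub (Q a) (s.biUnion Q)
    have h2 := hnn (Q a ∩ s.biUnion Q)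
    linarith

theorem monosubmp_easy_approx {V : Type*} [Fintype V] [DecidableEq V]
    (k : ℕ) (hk : 0 < k)
    (f : Finset V → ℝ)
    (hnn : ∀ S, 0 ≤ f S)
    (hmono : ∀ A B : Finset V, A ⊆ B → f A ≤ f B)
    (hsub : ∀ A B : Finset V, f (A ∩ B) + f (A ∪ B) ≤ f A + f B)
    (hempty : f ∅ = 0)
    (t : Fin k → V) (ht : Function.Injective t)
    (hsorted : ∀ i j : Fin k, i ≤ j → f {t i} ≤ f {t j})
    (P : Fin k → Finset V)
    (hdisj : ∀ i j, i ≠ j → Disjoint (P i) (P j))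
    (hcover : Finset.univ.biUnion P = Finset.univ)
    (hti : ∀ i, t i ∈ P i) :
    f ((Finset.univ \ Finset.image t Finset.univ) ∪
        {t ⟨k - 1, Nat.sub_lt hk Nat.one_pos⟩})
      + ∑ i ∈ Finset.univ.filter
          (fun i => i ≠ (⟨k - 1, Nat.sub_lt hk Nat.one_pos⟩ : Fin k)), f {t i}
    ≤ (2 - 1 / (k : ℝ)) * ∑ i, f (P i) := by
  classical
  set last : Fin k := ⟨k - 1, Nat.sub_lt hk Nat.one_pos⟩ with hlastdef
  set T : Finset V := Finset.image t Finset.univ with hT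
  set Q : Fin k → Finset V := fun i => if i = last then P i else P i \ T with hQ
  set S : ℝ := ∑ i, f (P i) with hS
  have hle_last : ∀ i : Fin k, i ≤ last := by
    intro i
    have := i.2
    simp only [Fin.le_def, hlastdef]
    omega
  -- filter = erase
  have hfe : Finset.univ.filter (fun i => i ≠ last) = Finset.univ.erase last :=
    Finset.filter_ne' _ _
  -- f A ≤ S
  have hsubA : (Finset.univ \ T) ∪ {t last} ⊆ Finset.univ.biUnion Q := by
    intro x hx
    rcases Finset.mem_union.1 hx with hx | hx
    · have hxT : x ∉ T := (Finset.mem_sdiff.1 hx).2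
      have : x ∈ Finset.univ.biUnion P := by rw [hcover]; exact Finset.mem_univ x
      rcases Finset.mem_biUnion.1 this with ⟨i, _, hxi⟩
      refine Finset.mem_biUnion.2 ⟨i, Finset.mem_univ i, ?_⟩
      by_cases hi : i = last
      · simp only [hQ, if_pos hi]
        exact hi ▸ hxi
      · simp [hQ, hi, Finset.mem_sdiff, hxi, hxT]
    · refine Finset.mem_biUnion.2 ⟨last, Finset.mem_univ last, ?_⟩
      simp only [Finset.mem_singleton] at hx
      simp [hQ, hx, hti last]
  have hfA : f ((Finset.univ \ T) ∪ {t last}) ≤ S := by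
    calc f ((Finset.univ \ T) ∪ {t last})
        ≤ f (Finset.univ.biUnion Q) := hmono _ _ hsubA
      _ ≤ ∑ i, f (Q i) := f_biUnion_le' f hnn hsub hempty _ _
      _ ≤ S := by
          apply Finset.sum_le_sum
          intro i _
          by_cases hi : i = last
          · simp [hQ, hi]
          · simp only [hQ, if_neg hi]
            exact hmono _ _ (Finset.sdiff_subset)
  -- singleton bounds
  have hsing : ∀ i : Fin k, f {t i} ≤ f (P i) := fun i =>
    hmono _ _ (Finset.singleton_subset_iff.2 (hti i))
  set a : ℝ := ∑ i ∈ Finset.univ.filter (fun i => i ≠ last), f {t i} with ha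
  set b : ℝ := f {t last} with hb
  have h2 : a ≤ ((k : ℝ) - 1) * b := by
    rw [ha, hfe]
    have hcard : ((Finset.univ.erase last).card : ℝ) = (k : ℝ) - 1 := by
      rw [Finset.card_erase_of_mem (Finset.mem_univ last), Finset.card_univ, Fintype.card_fin,
        Nat.cast_sub hk, Nat.cast_one]
    calc ∑ i ∈ Finset.univ.erase last, f {t i}
        ≤ ∑ _i ∈ Finset.univ.erase last, b :=
          Finset.sum_le_sum (fun i _ => hsorted i last (hle_last i))
      _ = ((Finset.univ.erase last).card : ℝ) * b := by
          rw [Finset.sum_const, nsmul_eq_mul]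
      _ = ((k : ℝ) - 1) * b := by rw [hcard]
  have h3 : a + b ≤ S := by
    have : a + b = ∑ i, f {t i} := by
      rw [ha, hfe, hb]
      exact Finset.sum_erase_add _ _ (Finset.mem_univ last)
    rw [this, hS]
    exact Finset.sum_le_sum (fun i _ => hsing i)
  have hSnn : 0 ≤ S := Finset.sum_nonneg (fun i _ => hnn _)
  have hbnn : 0 ≤ b := hnn _
  have hK : (1 : ℝ) ≤ (k : ℝ) := by exact_mod_cast hk
  have hKpos : (0 : ℝ) < (k : ℝ) := by linarith
  have hinv : (k : ℝ) * (1 / (k : ℝ)) = 1 := by field_simp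
  -- k * a ≤ (k-1) * S
  have hka : (k : ℝ) * a ≤ ((k : ℝ) - 1) * S := by nlinarith
  nlinarith [mul_le_mul_of_nonneg_left hfA (le_of_lt hKpos)]
end

section
/- Let k ≥ 4, V = [k] × [k], R_i = {(i,j) : j ∈ [k]}, C_j = {(i,j) : i ∈ [k]}, φ_n(a) = min(a, 7k/8), φ_t(a) = min(3ka/8, 3k/8 + a − 1, 7k/8). Define g(S) = φ_t(|S|) if S contains some diagonal element (ℓ,ℓ), and g(S) = φ_n(|S|) otherwise, and f(S) = ∑_{i=1}^k (g(R_i ∩ S) + g(C_i ∩ S)). Then f is a nonnegative, monotone, submodular function on 2^V. -/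
theorem symgap_function_monotone_submodular (k : ℕ) (hk : 4 ≤ k)
    (φn : ℤ → ℝ) (hφn : ∀ a : ℤ, φn a = min (a : ℝ) (7 / 8 * k))
    (φt : ℤ → ℝ)
    (hφt : ∀ a : ℤ, φt a = min (3 / 8 * (k : ℝ) * a) (min (3 / 8 * k + a - 1) (7 / 8 * k)))
    (g : Finset (Fin k × Fin k) → ℝ)
    (hg : ∀ S : Finset (Fin k × Fin k),
      g S = if ∃ ℓ : Fin k, (ℓ, ℓ) ∈ S then φt S.card else φn S.card)
    (f : Finset (Fin k × Fin k) → ℝ)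
    (hf : ∀ S : Finset (Fin k × Fin k),
      f S = ∑ i : Fin k,
        (g (S.filter (fun p => p.1 = i)) + g (S.filter (fun p => p.2 = i)))) :
    (∀ S, 0 ≤ f S) ∧
    (∀ A B : Finset (Fin k × Fin k), A ⊆ B → f A ≤ f B) ∧
    (∀ A B : Finset (Fin k × Fin k), f (A ∩ B) + f (A ∪ B) ≤ f A + f B) := by
  have hK : (4:ℝ) ≤ (k:ℝ) := by exact_mod_cast hk
  -- key real-number lemma: submodularity of min(·, M)
  have minsub : ∀ M x y u v : ℝ, x + y = u + v → x ≤ u → x ≤ v →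
      min x M + min y M ≤ min u M + min v M := by
    intro M x y u v h hxu hxv
    rcases min_cases x M with ⟨e1,h1⟩|⟨e1,h1⟩ <;>
    rcases min_cases y M with ⟨e2,h2⟩|⟨e2,h2⟩ <;>
    rcases min_cases u M with ⟨e3,h3⟩|⟨e3,h3⟩ <;>
    rcases min_cases v M with ⟨e4,h4⟩|⟨e4,h4⟩ <;>
    rw [e1,e2,e3,e4] <;> linarith
  -- simplification of φt for a ≥ 1
  have hφt1 : ∀ a : ℤ, 1 ≤ a → φt a = min (3/8*(k:ℝ) + a - 1) (7/8*k) := by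
    intro a ha
    have ha' : (1:ℝ) ≤ (a:ℝ) := by exact_mod_cast ha
    rw [hφt]
    apply min_eq_right
    refine le_trans (min_le_left _ _) ?_
    nlinarith [mul_nonneg (by linarith : (0:ℝ) ≤ (a:ℝ)-1)
      (by linarith : (0:ℝ) ≤ 3/8*(k:ℝ)-1)]
  have hcard1 : ∀ (T : Finset (Fin k × Fin k)), (∃ ℓ : Fin k, (ℓ,ℓ) ∈ T) →
      (1:ℝ) ≤ (T.card:ℝ) := by
    rintro T ⟨ℓ, hℓ⟩
    exact_mod_cast Finset.card_pos.mpr ⟨_, hℓ⟩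
  have hgt : ∀ T : Finset (Fin k × Fin k), (∃ ℓ : Fin k, (ℓ,ℓ) ∈ T) →
      g T = min (3/8*(k:ℝ) + T.card - 1) (7/8*k) := by
    intro T hT
    obtain ⟨ℓ, hℓ⟩ := hT
    rw [hg, if_pos ⟨ℓ, hℓ⟩, hφt1]
    · norm_cast
    · exact_mod_cast Finset.card_pos.mpr ⟨_, hℓ⟩
  have hgn : ∀ T : Finset (Fin k × Fin k), ¬(∃ ℓ : Fin k, (ℓ,ℓ) ∈ T) →
      g T = min ((T.card:ℝ)) (7/8*k) := by
    intro T hT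
    rw [hg, if_neg hT, hφn]
    norm_cast
  -- nonnegativity of g
  have g_nonneg : ∀ T, 0 ≤ g T := by
    intro T
    by_cases hT : ∃ ℓ : Fin k, (ℓ,ℓ) ∈ T
    · rw [hgt T hT]
      have := hcard1 T hT
      exact le_min (by linarith) (by linarith)
    · rw [hgn T hT]
      have : (0:ℝ) ≤ (T.card:ℝ) := by positivity
      exact le_min (by linarith) (by linarith)
  -- monotonicity of g
  have g_mono : ∀ T1 T2 : Finset (Fin k × Fin k), T1 ⊆ T2 → g T1 ≤ g T2 := by
    intro T1 T2 hsub
    have hc : (T1.card:ℝ) ≤ (T2.card:ℝ) := by exact_mod_cast Finset.card_le_card hsub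
    by_cases h2 : ∃ ℓ : Fin k, (ℓ,ℓ) ∈ T2
    · by_cases h1 : ∃ ℓ : Fin k, (ℓ,ℓ) ∈ T1
      · rw [hgt _ h1, hgt _ h2]
        exact min_le_min (by linarith) le_rfl
      · rw [hgn _ h1, hgt _ h2]
        obtain ⟨ℓ, hℓ⟩ := h2
        have hni : (ℓ,ℓ) ∉ T1 := fun h => h1 ⟨ℓ, h⟩
        have hins : T1.card + 1 ≤ T2.card := by
          rw [← Finset.card_insert_of_notMem hni]
          exact Finset.card_le_card (Finset.insert_subset hℓ hsub)
        have h' : (T1.card:ℝ) + 1 ≤ (T2.card:ℝ) := by exact_mod_cast hins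
        refine le_min (le_trans (min_le_left _ _) (by linarith)) (min_le_right _ _)
    · have h1 : ¬∃ ℓ : Fin k, (ℓ,ℓ) ∈ T1 := fun ⟨ℓ, h⟩ => h2 ⟨ℓ, hsub h⟩
      rw [hgn _ h1, hgn _ h2]
      exact min_le_min hc le_rfl
  -- submodularity of g
  have g_submod : ∀ A B : Finset (Fin k × Fin k),
      g (A ∩ B) + g (A ∪ B) ≤ g A + g B := by
    intro A B
    have hcard : ((A ∩ B).card:ℝ) + ((A ∪ B).card:ℝ) = (A.card:ℝ) + (B.card:ℝ) := by
      exact_mod_cast Finset.card_inter_add_card_union A B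
    have hca : ((A ∩ B).card:ℝ) ≤ (A.card:ℝ) := by
      exact_mod_cast Finset.card_le_card (Finset.inter_subset_left)
    have hcb : ((A ∩ B).card:ℝ) ≤ (B.card:ℝ) := by
      exact_mod_cast Finset.card_le_card (Finset.inter_subset_right)
    by_cases hA : ∃ ℓ : Fin k, (ℓ,ℓ) ∈ A
    · have hU : ∃ ℓ : Fin k, (ℓ,ℓ) ∈ A ∪ B :=
        hA.imp fun ℓ h => Finset.mem_union_left _ h
      by_cases hB : ∃ ℓ : Fin k, (ℓ,ℓ) ∈ B
      · by_cases hI : ∃ ℓ : Fin k, (ℓ,ℓ) ∈ A ∩ B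
        · rw [hgt _ hI, hgt _ hU, hgt _ hA, hgt _ hB]
          exact minsub _ _ _ _ _ (by linarith) (by linarith) (by linarith)
        · rw [hgn _ hI, hgt _ hU, hgt _ hA, hgt _ hB]
          have step : min (((A ∩ B).card:ℝ)) (7/8*k) ≤
              min (3/8*(k:ℝ) + ((A ∩ B).card:ℝ) - 1) (7/8*k) :=
            min_le_min (by linarith) le_rfl
          refine le_trans (add_le_add_left step _) ?_
          exact minsub _ _ _ _ _ (by linarith) (by linarith) (by linarith)
      · have hI : ¬∃ ℓ : Fin k, (ℓ,ℓ) ∈ A ∩ B :=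
          fun ⟨ℓ, h⟩ => hB ⟨ℓ, (Finset.mem_inter.mp h).2⟩
        rw [hgn _ hI, hgt _ hU, hgt _ hA, hgn _ hB]
        exact minsub _ _ _ _ _ (by linarith) (by linarith) (by linarith)
    · by_cases hB : ∃ ℓ : Fin k, (ℓ,ℓ) ∈ B
      · have hU : ∃ ℓ : Fin k, (ℓ,ℓ) ∈ A ∪ B :=
          hB.imp fun ℓ h => Finset.mem_union_right _ h
        have hI : ¬∃ ℓ : Fin k, (ℓ,ℓ) ∈ A ∩ B :=
          fun ⟨ℓ, h⟩ => hA ⟨ℓ, (Finset.mem_inter.mp h).1⟩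
        rw [hgn _ hI, hgt _ hU, hgn _ hA, hgt _ hB]
        exact minsub _ _ _ _ _ (by linarith) (by linarith) (by linarith)
      · have hU : ¬∃ ℓ : Fin k, (ℓ,ℓ) ∈ A ∪ B := by
          rintro ⟨ℓ, h⟩
          rcases Finset.mem_union.mp h with h' | h'
          · exact hA ⟨ℓ, h'⟩
          · exact hB ⟨ℓ, h'⟩
        have hI : ¬∃ ℓ : Fin k, (ℓ,ℓ) ∈ A ∩ B :=
          fun ⟨ℓ, h⟩ => hA ⟨ℓ, (Finset.mem_inter.mp h).1⟩
        rw [hgn _ hI, hgn _ hU, hgn _ hA, hgn _ hB]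
        exact minsub _ _ _ _ _ (by linarith) (by linarith) (by linarith)
  refine ⟨?_, ?_, ?_⟩
  · intro S
    rw [hf]
    exact Finset.sum_nonneg fun i _ => add_nonneg (g_nonneg _) (g_nonneg _)
  · intro A B hAB
    rw [hf, hf]
    exact Finset.sum_le_sum fun i _ =>
      add_le_add (g_mono _ _ (Finset.filter_subset_filter _ hAB))
        (g_mono _ _ (Finset.filter_subset_filter _ hAB))
  · intro A B
    rw [hf, hf, hf, hf, ← Finset.sum_add_distrib, ← Finset.sum_add_distrib]
    apply Finset.sum_le_sum
    intro i _
    have h1 := g_submod (A.filter (fun p => p.1 = i)) (B.filter (fun p => p.1 = i))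
    have h2 := g_submod (A.filter (fun p => p.2 = i)) (B.filter (fun p => p.2 = i))
    rw [← Finset.filter_inter_distrib, ← Finset.filter_union] at h1 h2
    linarith
end

section
/- Suppose OPT_MWC and OPT_GCOV denote the optimum values of graph multiway cut and graph coverage multiway partition on the same weighted graph instance, so that OPT_GCOV = OPT_MWC + W where W = ∑_{e∈E} w_e and OPT_MWC ≤ W. If a partition S_1,…,S_k satisfies (1/2)∑_i d(S_i) ≤ α·OPT_MWC for some α ≥ 1, then ∑_i b(S_i) ≤ ((α+1)/2)·OPT_GCOV. -/
theorem mwc_to_gcov_approx (OPTmwc OPTgcov W α C B : ℝ)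
    (h1 : OPTgcov = OPTmwc + W)
    (h2 : OPTmwc ≤ W)
    (h3 : B = C + W)
    (h4 : C ≤ α * OPTmwc)
    (h5 : 1 ≤ α) :
    B ≤ ((α + 1) / 2) * OPTgcov := by
  nlinarith [mul_nonneg (by linarith : (0:ℝ) ≤ α - 1) (by linarith : (0:ℝ) ≤ W - OPTmwc)]
end
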